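/- (Injectivity of the mean energy / moment map) If the finite set A ⊂ ℝⁿ affinely spans ℝⁿ, then the map β ↦ ⟨E⟩(β) = Σ_{ω∈A} p_ω(β)·ω from (ℝⁿ)* to ℝⁿ is injective. -/

import Mathlib

private lemma aux_neg {u v : ℝ} (h : u ≠ v) :
    (u - v) * (Real.exp (-u) - Real.exp (-v)) < 0 := by
  rcases lt_or_gt_of_ne h with hlt | hlt
  · apply mul_neg_of_neg_of_pos (by linarith)
    have := Real.exp_lt_exp.mpr (neg_lt_neg hlt)
    linarith
  · apply mul_neg_of_pos_of_neg (by linarith)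
    have := Real.exp_lt_exp.mpr (neg_lt_neg hlt)
    linarith

private lemma aux_nonpos (u v : ℝ) :
    (u - v) * (Real.exp (-u) - Real.exp (-v)) ≤ 0 := by
  rcases eq_or_ne u v with rfl | h
  · simp
  · exact (aux_neg h).le

private lemma key {ι : Type*} [DecidableEq ι] (A : Finset ι) (a x : ι → ℝ)
    (ha : ∀ ω ∈ A, 0 < a ω) {ω₁ ω₂ : ι} (h₁ : ω₁ ∈ A) (h₂ : ω₂ ∈ A)
    (hx : x ω₁ ≠ x ω₂) :
    (∑ ω ∈ A, a ω * (x ω * Real.exp (-x ω))) * (∑ ω ∈ A, a ω)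
      < (∑ ω ∈ A, a ω * x ω) * (∑ ω ∈ A, a ω * Real.exp (-x ω)) := by
  have e1 : (∑ ω ∈ A, a ω * (x ω * Real.exp (-x ω))) * (∑ ω ∈ A, a ω)
      = ∑ ω ∈ A, ∑ ω' ∈ A, a ω * (x ω * Real.exp (-x ω)) * a ω' :=
    Finset.sum_mul_sum _ _ _ _
  have e2 : (∑ ω ∈ A, a ω * x ω) * (∑ ω ∈ A, a ω * Real.exp (-x ω))
      = ∑ ω ∈ A, ∑ ω' ∈ A, (a ω * x ω) * (a ω' * Real.exp (-x ω')) :=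
    Finset.sum_mul_sum _ _ _ _
  have e3 : (∑ ω ∈ A, a ω * Real.exp (-x ω)) * (∑ ω ∈ A, a ω * x ω)
      = ∑ ω ∈ A, ∑ ω' ∈ A, (a ω * Real.exp (-x ω)) * (a ω' * x ω') :=
    Finset.sum_mul_sum _ _ _ _
  have e4 : (∑ ω ∈ A, a ω) * (∑ ω ∈ A, a ω * (x ω * Real.exp (-x ω)))
      = ∑ ω ∈ A, ∑ ω' ∈ A, a ω * (a ω' * (x ω' * Real.exp (-x ω'))) :=
    Finset.sum_mul_sum _ _ _ _
  have hS : (∑ ω ∈ A, ∑ ω' ∈ A, (a ω * a ω') *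
      ((x ω - x ω') * (Real.exp (-x ω) - Real.exp (-x ω'))))
      = 2 * ((∑ ω ∈ A, a ω * (x ω * Real.exp (-x ω))) * (∑ ω ∈ A, a ω)
        - (∑ ω ∈ A, a ω * x ω) * (∑ ω ∈ A, a ω * Real.exp (-x ω))) := by
    have step : (∑ ω ∈ A, ∑ ω' ∈ A, (a ω * a ω') *
        ((x ω - x ω') * (Real.exp (-x ω) - Real.exp (-x ω'))))
        = ∑ ω ∈ A, ∑ ω' ∈ A,
          (a ω * (x ω * Real.exp (-x ω)) * a ω'
            - (a ω * x ω) * (a ω' * Real.exp (-x ω'))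
            - (a ω * Real.exp (-x ω)) * (a ω' * x ω')
            + a ω * (a ω' * (x ω' * Real.exp (-x ω')))) :=
      Finset.sum_congr rfl fun ω _ => Finset.sum_congr rfl fun ω' _ => by ring
    rw [step]
    simp only [Finset.sum_add_distrib, Finset.sum_sub_distrib]
    rw [← e1, ← e2, ← e3, ← e4]
    ring
  have hlt : (∑ ω ∈ A, ∑ ω' ∈ A, (a ω * a ω') *
      ((x ω - x ω') * (Real.exp (-x ω) - Real.exp (-x ω')))) < 0 := by
    have : (∑ p ∈ A ×ˢ A, (a p.1 * a p.2) *
        ((x p.1 - x p.2) * (Real.exp (-x p.1) - Real.exp (-x p.2))))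
        < ∑ _p ∈ A ×ˢ A, (0 : ℝ) := by
      apply Finset.sum_lt_sum
      · intro p hp
        simp only [Finset.mem_product] at hp
        exact mul_nonpos_of_nonneg_of_nonpos
          (mul_nonneg (ha _ hp.1).le (ha _ hp.2).le) (aux_nonpos _ _)
      · refine ⟨(ω₁, ω₂), Finset.mem_product.mpr ⟨h₁, h₂⟩, ?_⟩
        exact mul_neg_of_pos_of_neg (mul_pos (ha _ h₁) (ha _ h₂)) (aux_neg hx)
    rw [Finset.sum_product] at this
    simpa using this
  rw [hS] at hlt
  linarith

theorem moment_map_injective (n : ℕ) (A : Finset (Fin n → ℝ))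
    (hA : affineSpan ℝ (A : Set (Fin n → ℝ)) = ⊤) :
    Function.Injective (fun β : (Fin n → ℝ) →L[ℝ] ℝ =>
      ∑ ω ∈ A, (Real.exp (-(β ω)) / (∑ ω' ∈ A, Real.exp (-(β ω')))) • ω) := by
  intro β₁ β₂ h
  by_contra hne
  simp only at h
  set γ : (Fin n → ℝ) →L[ℝ] ℝ := β₁ - β₂ with hγdef
  have hγ : ∀ v, γ v = β₁ v - β₂ v := fun v => rfl
  -- γ is not constant on A
  have hnc : ∃ ω₁ ∈ A, ∃ ω₂ ∈ A, γ ω₁ ≠ γ ω₂ := by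
    by_contra hc
    push_neg at hc
    have hdir : vectorSpan ℝ (A : Set (Fin n → ℝ)) = ⊤ := by
      rw [← direction_affineSpan, hA, AffineSubspace.direction_top]
    have hker : vectorSpan ℝ (A : Set (Fin n → ℝ))
        ≤ LinearMap.ker (γ : (Fin n → ℝ) →ₗ[ℝ] ℝ) := by
      rw [vectorSpan_def]
      apply Submodule.span_le.mpr
      rintro v ⟨v₁, hv₁, v₂, hv₂, rfl⟩
      simp only [SetLike.mem_coe, LinearMap.mem_ker, ContinuousLinearMap.coe_coe,
        vsub_eq_sub, map_sub]
      rw [hc v₁ hv₁ v₂ hv₂, sub_self]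
    rw [hdir, top_le_iff] at hker
    apply hne
    ext v
    have hv : v ∈ LinearMap.ker (γ : (Fin n → ℝ) →ₗ[ℝ] ℝ) := by rw [hker]; trivial
    have : γ v = 0 := hv
    have := hγ v
    rw [‹γ v = 0›] at this
    linarith
  obtain ⟨ω₁, h₁, ω₂, h₂, hx⟩ := hnc
  have hAne : A.Nonempty := by
    by_contra hAe
    rw [Finset.not_nonempty_iff_eq_empty] at hAe
    subst hAe
    rw [Finset.coe_empty, AffineSubspace.span_empty] at hA
    have : (0 : Fin n → ℝ) ∈ (⊥ : AffineSubspace ℝ (Fin n → ℝ)) := by rw [hA]; trivial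
    exact AffineSubspace.notMem_bot ℝ (Fin n → ℝ) _ this
  have hae : ∀ ω, Real.exp (-(β₁ ω)) = Real.exp (-(β₂ ω)) * Real.exp (-(γ ω)) := by
    intro ω
    rw [← Real.exp_add, hγ]
    ring_nf
  have hapos : ∀ ω ∈ A, (0 : ℝ) < Real.exp (-(β₂ ω)) := fun ω _ => Real.exp_pos _
  have hZ₂ : (0 : ℝ) < ∑ ω ∈ A, Real.exp (-(β₂ ω)) :=
    Finset.sum_pos hapos hAne
  have hZ₁ : (0 : ℝ) < ∑ ω ∈ A, Real.exp (-(β₂ ω)) * Real.exp (-(γ ω)) :=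
    Finset.sum_pos (fun ω hω => mul_pos (hapos ω hω) (Real.exp_pos _)) hAne
  have hkey := key A (fun ω => Real.exp (-(β₂ ω))) (fun ω => γ ω) hapos h₁ h₂ hx
  try simp only at hkey
  -- apply γ to the equality h
  have h' := congrArg γ h
  simp only [map_sum, map_smul, smul_eq_mul, hae] at h'
  have l1 : ∑ ω ∈ A, (Real.exp (-(β₂ ω)) * Real.exp (-(γ ω))
        / (∑ ω' ∈ A, Real.exp (-(β₂ ω')) * Real.exp (-(γ ω')))) * γ ω
      = (∑ ω ∈ A, Real.exp (-(β₂ ω)) * Real.exp (-(γ ω)) * γ ω)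
        / (∑ ω' ∈ A, Real.exp (-(β₂ ω')) * Real.exp (-(γ ω'))) := by
    rw [Finset.sum_div]
    exact Finset.sum_congr rfl fun ω _ => div_mul_eq_mul_div _ _ _
  have l2 : ∑ ω ∈ A, (Real.exp (-(β₂ ω)) / (∑ ω' ∈ A, Real.exp (-(β₂ ω')))) * γ ω
      = (∑ ω ∈ A, Real.exp (-(β₂ ω)) * γ ω) / (∑ ω' ∈ A, Real.exp (-(β₂ ω'))) := by
    rw [Finset.sum_div]
    exact Finset.sum_congr rfl fun ω _ => div_mul_eq_mul_div _ _ _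
  rw [l1, l2, div_eq_div_iff (ne_of_gt hZ₁) (ne_of_gt hZ₂)] at h'
  have r1 : (∑ ω ∈ A, Real.exp (-(β₂ ω)) * Real.exp (-(γ ω)) * γ ω)
      = ∑ ω ∈ A, Real.exp (-(β₂ ω)) * (γ ω * Real.exp (-(γ ω))) :=
    Finset.sum_congr rfl fun ω _ => by ring
  rw [r1] at h'
  linarith
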